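/- Let α > 0 and β ∈ ℝ with |β| < α, let μ > 0, G > 0, v > 0 be real numbers, and let t < T be real numbers. Define c(v,u) := v·G·e^{μu} − iβ and η(w) := (1/μ)·[ √(α² + w²) − iβ·arcsinh(w/α) − √(α² − β²)·log( 2α²·(α² − iβw + √(α² − β²)·√(α² + w²)) / ((w + iβ)·(α² − β²)^{3/2}) ) ], where √ and log denote the principal complex square root and logarithm and arcsinh(z) := log(z + √(1 + z²)). Then ∫_t^T √( α² − (β + i·v·G·e^{μu})² ) du = η(c(v,T)) − η(c(v,t)). -/

import Mathlib

set_option maxHeartbeats 1000000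
open MeasureTheory Complex

lemma re_cpow_half_pos {z : ℂ} (hz : 0 < z.re) : 0 < (z ^ (1/2 : ℂ)).re := by
  have hz0 : z ≠ 0 := by intro h; rw [h] at hz; simp at hz
  rw [Complex.cpow_def_of_ne_zero hz0, Complex.exp_re]
  have harg : |z.arg| < Real.pi / 2 := Complex.abs_arg_lt_pi_div_two_iff.mpr (Or.inl hz)
  have him : (Complex.log z * (1/2 : ℂ)).im = z.arg / 2 := by
    simp [Complex.log_im, Complex.mul_im]; ring
  rw [him]
  have hcos : 0 < Real.cos (z.arg / 2) := by
    apply Real.cos_pos_of_mem_Ioo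
    constructor
    · nlinarith [abs_lt.mp harg |>.1, Real.pi_pos]
    · nlinarith [abs_lt.mp harg |>.2, Real.pi_pos]
  positivity

lemma ne_zero_of_re_pos' {z : ℂ} (hz : 0 < z.re) : z ≠ 0 := by
  intro h; rw [h] at hz; simp at hz

lemma sq_cpow_half {z : ℂ} (hz : z ≠ 0) : (z ^ (1/2 : ℂ)) ^ 2 = z := by
  have : z ^ (1/2 : ℂ) * z ^ (1/2 : ℂ) = z := by
    rw [← Complex.cpow_add _ _ hz]; norm_num
  rw [sq]; exact this

lemma eq_of_sq_eq_sq_re_pos {a b : ℂ} (h : a ^ 2 = b ^ 2) (ha : 0 < a.re) (hb : 0 < b.re) :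
    a = b := by
  have : (a - b) * (a + b) = 0 := by linear_combination h
  rcases mul_eq_zero.mp this with h1 | h1
  · exact sub_eq_zero.mp h1
  · exfalso
    have : (a + b).re = 0 := by rw [h1]; simp
    simp [Complex.add_re] at this
    linarith

lemma key_alg (a b k S W : ℂ) (hS2 : S^2 = a^2 + W^2)
    (hk2 : k^2 = a^2 + (Complex.I*b)^2)
    (hS0 : S ≠ 0) (hN0 : a^2 - Complex.I*b*W + k*S ≠ 0) (hD0 : W + Complex.I*b ≠ 0) :
    (W/S - Complex.I*b*(1/S) - k*((-(Complex.I*b)+k*(W/S))/(a^2 - Complex.I*b*W + k*S) - 1/(W+Complex.I*b)))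
      * (W+Complex.I*b) = S := by
  have hN0' : a ^ 2 - W * Complex.I * b + S * k ≠ 0 := by convert hN0 using 1; ring
  field_simp
  linear_combination ((Complex.I*b)^2 + W*(Complex.I*b) - S*k) * hS2
    + (S^2 - W^2 - W*(Complex.I*b)) * hk2

lemma eta_hasDerivAt (α β μ G v : ℝ) (hα : 0 < α) (hβ : |β| < α) (hμ : 0 < μ)
    (hG : 0 < G) (hv : 0 < v) (u : ℝ) :
    HasDerivAt (fun u : ℝ => (1 / (μ : ℂ)) *
      (((α : ℂ) ^ 2 + (((v * G * Real.exp (μ * u) : ℝ) : ℂ) - Complex.I * (β : ℂ)) ^ 2) ^ (1 / 2 : ℂ)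
        - Complex.I * (β : ℂ) *
            Complex.log ((((v * G * Real.exp (μ * u) : ℝ) : ℂ) - Complex.I * (β : ℂ)) / (α : ℂ) + (1 + ((((v * G * Real.exp (μ * u) : ℝ) : ℂ) - Complex.I * (β : ℂ)) / (α : ℂ)) ^ 2) ^ (1 / 2 : ℂ))
        - ((α : ℂ) ^ 2 - (β : ℂ) ^ 2) ^ (1 / 2 : ℂ) *
            Complex.log (2 * (α : ℂ) ^ 2 *
              ((α : ℂ) ^ 2 - Complex.I * (β : ℂ) * (((v * G * Real.exp (μ * u) : ℝ) : ℂ) - Complex.I * (β : ℂ))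
                + ((α : ℂ) ^ 2 - (β : ℂ) ^ 2) ^ (1 / 2 : ℂ) *
                  ((α : ℂ) ^ 2 + (((v * G * Real.exp (μ * u) : ℝ) : ℂ) - Complex.I * (β : ℂ)) ^ 2) ^ (1 / 2 : ℂ)) /
              (((((v * G * Real.exp (μ * u) : ℝ) : ℂ) - Complex.I * (β : ℂ)) + Complex.I * (β : ℂ)) *
                ((((α ^ 2 - β ^ 2) ^ ((3 : ℝ) / 2) : ℝ)) : ℂ)))))
      (((α : ℂ) ^ 2 - ((β : ℂ) + Complex.I * (v : ℂ) * (G : ℂ) * (Real.exp (μ * u) : ℂ)) ^ 2)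
          ^ (1 / 2 : ℂ)) u := by
  set x : ℝ := v * G * Real.exp (μ * u) with hxdef
  set a : ℂ := (α : ℂ) with hadef
  set b : ℂ := (β : ℂ) with hbdef
  set W : ℂ := ((x : ℝ) : ℂ) - Complex.I * b with hWdef
  set S : ℂ := (a ^ 2 + W ^ 2) ^ (1 / 2 : ℂ) with hSdef
  set h : ℂ := (1 + (W / a) ^ 2) ^ (1 / 2 : ℂ) with hhdef
  set k : ℂ := (a ^ 2 - b ^ 2) ^ (1 / 2 : ℂ) with hkdef
  set kr : ℝ := (α ^ 2 - β ^ 2) ^ ((1:ℝ) / 2) with hkrdef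
  set K3 : ℂ := ((((α ^ 2 - β ^ 2) ^ ((3 : ℝ) / 2) : ℝ)) : ℂ) with hK3def
  clear_value x a b W S h k kr K3
  have hx : 0 < x := by rw [hxdef]; positivity
  have ha0 : a ≠ 0 := by rw [hadef]; exact_mod_cast hα.ne'
  have hβα : β ^ 2 < α ^ 2 := by
    rcases abs_lt.mp hβ with ⟨h1, h2⟩; nlinarith
  have hWre : W.re = x := by rw [hWdef, hbdef]; simp
  have hWim : W.im = -β := by rw [hWdef, hbdef]; simp
  have hAre : (a ^ 2 + W ^ 2).re = α ^ 2 + (x ^ 2 - β ^ 2) := by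
    rw [hadef]
    simp [pow_two, Complex.add_re, Complex.mul_re, hWre, hWim]
    try ring
  have hApos : 0 < (a ^ 2 + W ^ 2).re := by rw [hAre]; nlinarith
  have hA0 : a ^ 2 + W ^ 2 ≠ 0 := ne_zero_of_re_pos' hApos
  have hSre : 0 < S.re := by rw [hSdef]; exact re_cpow_half_pos hApos
  have hS0 : S ≠ 0 := ne_zero_of_re_pos' hSre
  have hS2 : S ^ 2 = a ^ 2 + W ^ 2 := by rw [hSdef]; exact sq_cpow_half hA0
  have hWa : W / a = ((x / α : ℝ) : ℂ) - Complex.I * ((β / α : ℝ) : ℂ) := by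
    rw [hWdef, hadef, hbdef]; push_cast
    rw [sub_div, mul_div_assoc]
  have hWare : (W / a).re = x / α := by rw [hWa]; simp
  have hWaim : (W / a).im = -(β / α) := by rw [hWa]; simp
  have hBre : (1 + (W / a) ^ 2).re = 1 + ((x / α) ^ 2 - (β / α) ^ 2) := by
    simp [pow_two, Complex.add_re, Complex.mul_re, hWare, hWaim]
    try ring
  have hBpos : 0 < (1 + (W / a) ^ 2).re := by
    rw [hBre]
    have h1 : (β / α) ^ 2 < 1 := by
      rw [div_pow, div_lt_one (by positivity)]; exact hβα
    have h2 : 0 < (x / α) ^ 2 := by positivity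
    nlinarith
  have hB0 : 1 + (W / a) ^ 2 ≠ 0 := ne_zero_of_re_pos' hBpos
  have hhre : 0 < h.re := by rw [hhdef]; exact re_cpow_half_pos hBpos
  have hh0 : h ≠ 0 := ne_zero_of_re_pos' hhre
  have hh2 : h ^ 2 = 1 + (W / a) ^ 2 := by rw [hhdef]; exact sq_cpow_half hB0
  have hah : a * h = S := by
    apply eq_of_sq_eq_sq_re_pos
    · rw [mul_pow, hh2, hS2]; field_simp
    · have : (a * h).re = α * h.re := by
        rw [hadef, Complex.re_ofReal_mul]
      rw [this]; positivity
    · exact hSre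
  have hgre : 0 < (W / a + h).re := by
    have : (W / a + h).re = x / α + h.re := by simp [Complex.add_re, hWare]
    rw [this]; positivity
  have hg0 : W / a + h ≠ 0 := ne_zero_of_re_pos' hgre
  have hp : (0:ℝ) < α ^ 2 - β ^ 2 := by linarith
  have hkrpos : 0 < kr := by rw [hkrdef]; exact Real.rpow_pos_of_pos hp _
  have hkab : a ^ 2 - b ^ 2 = (((α ^ 2 - β ^ 2 : ℝ)) : ℂ) := by
    rw [hadef, hbdef]; push_cast; ring
  have hk : k = ((kr : ℝ) : ℂ) := by
    rw [hkdef, hkrdef, Complex.ofReal_cpow hp.le, hkab]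
    norm_num
  have hk0 : k ≠ 0 := by rw [hk]; exact_mod_cast hkrpos.ne'
  have hk2 : k ^ 2 = a ^ 2 - b ^ 2 := by
    rw [hkdef]; refine sq_cpow_half ?_
    rw [hkab]; exact_mod_cast hp.ne'
  have hK3pos : (0:ℝ) < (α ^ 2 - β ^ 2) ^ ((3 : ℝ) / 2) := Real.rpow_pos_of_pos hp _
  have hK30 : K3 ≠ 0 := by rw [hK3def]; exact_mod_cast hK3pos.ne'
  have hNre : (a ^ 2 - Complex.I * b * W + k * S).re = (α ^ 2 - β ^ 2) + kr * S.re := by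
    rw [hk, hadef, hbdef]
    simp [pow_two, Complex.add_re, Complex.sub_re, Complex.mul_re, Complex.mul_im,
      hWre, hWim, Complex.re_ofReal_mul]
    try ring
  have hNpos : 0 < (a ^ 2 - Complex.I * b * W + k * S).re := by
    rw [hNre]; positivity
  have hN0 : a ^ 2 - Complex.I * b * W + k * S ≠ 0 := ne_zero_of_re_pos' hNpos
  have hD : W + Complex.I * b = ((x : ℝ) : ℂ) := by rw [hWdef]; ring
  have hD0 : W + Complex.I * b ≠ 0 := by rw [hD]; exact_mod_cast hx.ne'
  have hDK30 : (W + Complex.I * b) * K3 ≠ 0 := mul_ne_zero hD0 hK30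
  have h2a0 : (2 : ℂ) * a ^ 2 ≠ 0 := by
    refine mul_ne_zero two_ne_zero (pow_ne_zero _ ha0)
  have hQre : 0 < (2 * a ^ 2 * (a ^ 2 - Complex.I * b * W + k * S) / ((W + Complex.I * b) * K3)).re := by
    have hden : (W + Complex.I * b) * K3 = (((x * (α ^ 2 - β ^ 2) ^ ((3 : ℝ) / 2) : ℝ)) : ℂ) := by
      rw [hD, hK3def]; push_cast; ring
    have hnum : 2 * a ^ 2 * (a ^ 2 - Complex.I * b * W + k * S)
        = (((2 * α ^ 2 : ℝ)) : ℂ) * (a ^ 2 - Complex.I * b * W + k * S) := by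
      rw [hadef]; push_cast; ring
    rw [hden, hnum, Complex.div_ofReal_re, Complex.re_ofReal_mul]
    have h2 : (0:ℝ) < x * (α ^ 2 - β ^ 2) ^ ((3 : ℝ) / 2) := by positivity
    exact div_pos (by positivity) h2
  -- derivative pieces (functions ℂ → ℂ at the point W)
  have hA' : HasDerivAt (fun z : ℂ => a ^ 2 + z ^ 2) (2 * W) W := by
    simpa using (hasDerivAt_pow 2 W).const_add (a ^ 2)
  have hS' : HasDerivAt (fun z : ℂ => (a ^ 2 + z ^ 2) ^ (1 / 2 : ℂ)) (W / S) W := by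
    have hd := hA'.cpow_const (c := (1 / 2 : ℂ)) (Complex.mem_slitPlane_iff.mpr (Or.inl hApos))
    have heq : (1 / 2 : ℂ) * (a ^ 2 + W ^ 2) ^ ((1 / 2 : ℂ) - 1) * (2 * W) = W / S := by
      rw [show (1 / 2 : ℂ) - 1 = -(1 / 2 : ℂ) by norm_num, Complex.cpow_neg, ← hSdef]
      field_simp
      try ring
    rw [← heq]; exact hd
  have hdiv : HasDerivAt (fun z : ℂ => z / a) (1 / a) W := by
    simpa using (hasDerivAt_id W).div_const a
  have hB' : HasDerivAt (fun z : ℂ => 1 + (z / a) ^ 2) (2 * (W / a) * (1 / a)) W := by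
    simpa using (hdiv.pow 2).const_add (1 : ℂ)
  have hh' : HasDerivAt (fun z : ℂ => (1 + (z / a) ^ 2) ^ (1 / 2 : ℂ)) (W / (a ^ 2 * h)) W := by
    have hd := hB'.cpow_const (c := (1 / 2 : ℂ)) (Complex.mem_slitPlane_iff.mpr (Or.inl hBpos))
    have heq : (1 / 2 : ℂ) * (1 + (W / a) ^ 2) ^ ((1 / 2 : ℂ) - 1) * (2 * (W / a) * (1 / a))
        = W / (a ^ 2 * h) := by
      rw [show (1 / 2 : ℂ) - 1 = -(1 / 2 : ℂ) by norm_num, Complex.cpow_neg, ← hhdef]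
      field_simp
      try ring
    rw [← heq]; exact hd
  have hlog1 : HasDerivAt
      (fun z : ℂ => Complex.log (z / a + (1 + (z / a) ^ 2) ^ (1 / 2 : ℂ)))
      (1 / S) W := by
    have hslit : W / a + (1 + (W / a) ^ 2) ^ (1 / 2 : ℂ) ∈ Complex.slitPlane := by
      rw [← hhdef]; exact Complex.mem_slitPlane_iff.mpr (Or.inl hgre)
    have hd := (hdiv.add hh').clog hslit
    simp only [Pi.add_apply] at hd
    rw [← hhdef] at hd
    have hstep : 1 / a + W / (a ^ 2 * h) = (W / a + h) * (a * h)⁻¹ := by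
      field_simp
      try ring
    have heq : (1 / a + W / (a ^ 2 * h)) / (W / a + h) = 1 / S := by
      rw [hstep, mul_comm, mul_div_assoc, div_self hg0, mul_one, ← hah, one_div]
    rw [← heq]; exact hd
  have hN' : HasDerivAt
      (fun z : ℂ => a ^ 2 - Complex.I * b * z + k * ((a ^ 2 + z ^ 2) ^ (1 / 2 : ℂ)))
      (-(Complex.I * b) + k * (W / S)) W := by
    have h1 : HasDerivAt (fun z : ℂ => a ^ 2 - Complex.I * b * z) (-(Complex.I * b)) W := by
      simpa using ((hasDerivAt_id W).const_mul (Complex.I * b)).const_sub (a ^ 2)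
    exact h1.add (hS'.const_mul k)
  have hden' : HasDerivAt (fun z : ℂ => (z + Complex.I * b) * K3) K3 W := by
    simpa using ((hasDerivAt_id W).add_const (Complex.I * b)).mul_const K3
  have hQ' : HasDerivAt
      (fun z : ℂ => 2 * a ^ 2 * (a ^ 2 - Complex.I * b * z + k * ((a ^ 2 + z ^ 2) ^ (1 / 2 : ℂ)))
        / ((z + Complex.I * b) * K3))
      ((2 * a ^ 2 * (-(Complex.I * b) + k * (W / S)) * ((W + Complex.I * b) * K3)
        - 2 * a ^ 2 * (a ^ 2 - Complex.I * b * W + k * S) * K3) / ((W + Complex.I * b) * K3) ^ 2) W := by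
    have hd := (hN'.const_mul (2 * a ^ 2)).div hden' hDK30
    rw [← hSdef] at hd
    exact hd
  have hlog2 : HasDerivAt
      (fun z : ℂ => Complex.log (2 * a ^ 2 *
        (a ^ 2 - Complex.I * b * z + k * ((a ^ 2 + z ^ 2) ^ (1 / 2 : ℂ)))
        / ((z + Complex.I * b) * K3)))
      ((-(Complex.I * b) + k * (W / S)) / (a ^ 2 - Complex.I * b * W + k * S)
        - 1 / (W + Complex.I * b)) W := by
    have hd := hQ'.clog (by
      rw [← hSdef]
      exact Complex.mem_slitPlane_iff.mpr (Or.inl hQre))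
    rw [← hSdef] at hd
    have heq : ((2 * a ^ 2 * (-(Complex.I * b) + k * (W / S)) * ((W + Complex.I * b) * K3)
        - 2 * a ^ 2 * (a ^ 2 - Complex.I * b * W + k * S) * K3) / ((W + Complex.I * b) * K3) ^ 2)
        / (2 * a ^ 2 * (a ^ 2 - Complex.I * b * W + k * S) / ((W + Complex.I * b) * K3))
        = (-(Complex.I * b) + k * (W / S)) / (a ^ 2 - Complex.I * b * W + k * S)
          - 1 / (W + Complex.I * b) := by
      field_simp
      try ring
    rw [← heq]; exact hd
  -- total complex derivative
  have hPhi : HasDerivAt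
      (fun z : ℂ => (1 / (μ : ℂ)) *
        ((a ^ 2 + z ^ 2) ^ (1 / 2 : ℂ)
          - Complex.I * b * Complex.log (z / a + (1 + (z / a) ^ 2) ^ (1 / 2 : ℂ))
          - k * Complex.log (2 * a ^ 2 *
              (a ^ 2 - Complex.I * b * z + k * ((a ^ 2 + z ^ 2) ^ (1 / 2 : ℂ)))
              / ((z + Complex.I * b) * K3))))
      ((1 / (μ : ℂ)) * (W / S - Complex.I * b * (1 / S)
        - k * ((-(Complex.I * b) + k * (W / S)) / (a ^ 2 - Complex.I * b * W + k * S)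
          - 1 / (W + Complex.I * b)))) W :=
    ((hS'.sub ((hlog1.const_mul (Complex.I * b)))).sub (hlog2.const_mul k)).const_mul (1 / (μ : ℂ))
  -- curve
  have hcurve : HasDerivAt (fun u : ℝ => ((v * G * Real.exp (μ * u) : ℝ) : ℂ) - Complex.I * b)
      (((μ * x : ℝ) : ℂ)) u := by
    have h1 : HasDerivAt (fun u : ℝ => μ * u) μ u := by
      simpa using (hasDerivAt_id u).const_mul μ
    have h2 : HasDerivAt (fun u : ℝ => v * G * Real.exp (μ * u)) (μ * x) u := by
      have h3 := (Real.hasDerivAt_exp (μ * u)).comp u h1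
      have h4 := h3.const_mul (v * G)
      have h5 : v * G * (Real.exp (μ * u) * μ) = μ * x := by rw [hxdef]; ring
      rw [h5] at h4; exact h4
    exact h2.ofReal_comp.sub_const (Complex.I * b)
  have hWeq : W = ((v * G * Real.exp (μ * u) : ℝ) : ℂ) - Complex.I * b := by
    rw [hWdef, hxdef]
  have hcomp := hPhi.comp_of_eq u hcurve hWeq
  have hfin : ((1 / (μ : ℂ)) * (W / S - Complex.I * b * (1 / S)
        - k * ((-(Complex.I * b) + k * (W / S)) / (a ^ 2 - Complex.I * b * W + k * S)
          - 1 / (W + Complex.I * b)))) * (((μ * x : ℝ) : ℂ))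
      = (a ^ 2 - (b + Complex.I * (v : ℂ) * (G : ℂ) * (Real.exp (μ * u) : ℂ)) ^ 2)
          ^ (1 / 2 : ℂ) := by
    have hbase : a ^ 2 - (b + Complex.I * (v : ℂ) * (G : ℂ) * (Real.exp (μ * u) : ℂ)) ^ 2
        = a ^ 2 + W ^ 2 := by
      rw [hWdef, hxdef, hbdef]
      push_cast [← Complex.ofReal_exp]
      linear_combination (-(((v:ℂ) * (G:ℂ) * ((Real.exp (μ * u) : ℝ):ℂ)) ^ 2 + ((β:ℝ):ℂ) ^ 2)) * Complex.I_sq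
    rw [hbase, ← hSdef]
    have hμx : ((μ * x : ℝ) : ℂ) = (μ : ℂ) * (W + Complex.I * b) := by
      rw [hD]; push_cast; ring
    rw [hμx]
    have hkey := key_alg a b k S W hS2 (by rw [hk2]; linear_combination (-(b^2)) * Complex.I_sq)
      hS0 hN0 hD0
    have hμ0 : (μ : ℂ) ≠ 0 := by exact_mod_cast hμ.ne'
    calc (1 / (μ : ℂ)) * (W / S - Complex.I * b * (1 / S)
        - k * ((-(Complex.I * b) + k * (W / S)) / (a ^ 2 - Complex.I * b * W + k * S)
          - 1 / (W + Complex.I * b))) * ((μ : ℂ) * (W + Complex.I * b))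
        = ((μ : ℂ) * (1 / (μ : ℂ))) * ((W / S - Complex.I * b * (1 / S)
          - k * ((-(Complex.I * b) + k * (W / S)) / (a ^ 2 - Complex.I * b * W + k * S)
            - 1 / (W + Complex.I * b))) * (W + Complex.I * b)) := by ring
      _ = (W / S - Complex.I * b * (1 / S)
          - k * ((-(Complex.I * b) + k * (W / S)) / (a ^ 2 - Complex.I * b * W + k * S)
            - 1 / (W + Complex.I * b))) * (W + Complex.I * b) := by
          rw [mul_one_div_cancel hμ0, one_mul]
      _ = S := hkey
  rw [hfin] at hcomp
  exact hcomp

theorem nig_samuelson_time_integral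
    (α β μ G v t T : ℝ) (hα : 0 < α) (hβ : |β| < α) (hμ : 0 < μ)
    (hG : 0 < G) (hv : 0 < v) (htT : t < T)
    (c : ℝ → ℝ → ℂ)
    (hc : ∀ w u : ℝ, c w u = ((w * G * Real.exp (μ * u) : ℝ) : ℂ) - Complex.I * (β : ℂ))
    (η : ℂ → ℂ)
    (hη : ∀ w : ℂ, η w = (1 / (μ : ℂ)) *
      (((α : ℂ) ^ 2 + w ^ 2) ^ (1 / 2 : ℂ)
        - Complex.I * (β : ℂ) *
            Complex.log (w / (α : ℂ) + (1 + (w / (α : ℂ)) ^ 2) ^ (1 / 2 : ℂ))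
        - ((α : ℂ) ^ 2 - (β : ℂ) ^ 2) ^ (1 / 2 : ℂ) *
            Complex.log (2 * (α : ℂ) ^ 2 *
              ((α : ℂ) ^ 2 - Complex.I * (β : ℂ) * w
                + ((α : ℂ) ^ 2 - (β : ℂ) ^ 2) ^ (1 / 2 : ℂ) *
                  ((α : ℂ) ^ 2 + w ^ 2) ^ (1 / 2 : ℂ)) /
              ((w + Complex.I * (β : ℂ)) *
                ((((α ^ 2 - β ^ 2) ^ ((3 : ℝ) / 2) : ℝ)) : ℂ))))) :
    ∫ u in t..T,
        ((α : ℂ) ^ 2 - ((β : ℂ) + Complex.I * (v : ℂ) * (G : ℂ) * (Real.exp (μ * u) : ℂ)) ^ 2)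
          ^ (1 / 2 : ℂ) =
      η (c v T) - η (c v t) := by
  have hβα : β ^ 2 < α ^ 2 := by
    rcases abs_lt.mp hβ with ⟨h1, h2⟩; nlinarith
  have hfun : (fun u : ℝ => η (c v u)) = (fun u : ℝ => (1 / (μ : ℂ)) *
      (((α : ℂ) ^ 2 + (((v * G * Real.exp (μ * u) : ℝ) : ℂ) - Complex.I * (β : ℂ)) ^ 2) ^ (1 / 2 : ℂ)
        - Complex.I * (β : ℂ) *
            Complex.log ((((v * G * Real.exp (μ * u) : ℝ) : ℂ) - Complex.I * (β : ℂ)) / (α : ℂ)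
              + (1 + ((((v * G * Real.exp (μ * u) : ℝ) : ℂ) - Complex.I * (β : ℂ)) / (α : ℂ)) ^ 2) ^ (1 / 2 : ℂ))
        - ((α : ℂ) ^ 2 - (β : ℂ) ^ 2) ^ (1 / 2 : ℂ) *
            Complex.log (2 * (α : ℂ) ^ 2 *
              ((α : ℂ) ^ 2 - Complex.I * (β : ℂ) * ((((v * G * Real.exp (μ * u) : ℝ) : ℂ) - Complex.I * (β : ℂ)))
                + ((α : ℂ) ^ 2 - (β : ℂ) ^ 2) ^ (1 / 2 : ℂ) *
                  ((α : ℂ) ^ 2 + ((((v * G * Real.exp (μ * u) : ℝ) : ℂ) - Complex.I * (β : ℂ))) ^ 2) ^ (1 / 2 : ℂ)) /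
              ((((((v * G * Real.exp (μ * u) : ℝ) : ℂ) - Complex.I * (β : ℂ))) + Complex.I * (β : ℂ)) *
                ((((α ^ 2 - β ^ 2) ^ ((3 : ℝ) / 2) : ℝ)) : ℂ))))) := by
    funext u
    rw [hη, hc]
  have hderiv : ∀ u ∈ Set.uIcc t T, HasDerivAt (fun u : ℝ => η (c v u))
      (((α : ℂ) ^ 2 - ((β : ℂ) + Complex.I * (v : ℂ) * (G : ℂ) * (Real.exp (μ * u) : ℂ)) ^ 2)
        ^ (1 / 2 : ℂ)) u := by
    intro u _
    rw [hfun]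
    exact eta_hasDerivAt α β μ G v hα hβ hμ hG hv u
  have hint : IntervalIntegrable (fun u : ℝ =>
      ((α : ℂ) ^ 2 - ((β : ℂ) + Complex.I * (v : ℂ) * (G : ℂ) * (Real.exp (μ * u) : ℂ)) ^ 2)
        ^ (1 / 2 : ℂ)) volume t T := by
    apply Continuous.intervalIntegrable
    rw [continuous_iff_continuousAt]
    intro u
    have hbasecont : ContinuousAt (fun u : ℝ =>
        (α : ℂ) ^ 2 - ((β : ℂ) + Complex.I * (v : ℂ) * (G : ℂ) * (Real.exp (μ * u) : ℂ)) ^ 2) u := by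
      fun_prop
    have hre : 0 < ((α : ℂ) ^ 2
        - ((β : ℂ) + Complex.I * (v : ℂ) * (G : ℂ) * (Real.exp (μ * u) : ℂ)) ^ 2).re := by
      obtain ⟨E, hE, hEdef⟩ : ∃ E : ℝ, 0 < E ∧ E = Real.exp (μ * u) :=
        ⟨_, Real.exp_pos _, rfl⟩
      rw [← hEdef]
      have : ((α : ℂ) ^ 2
          - ((β : ℂ) + Complex.I * (v : ℂ) * (G : ℂ) * (E : ℂ)) ^ 2).re
          = α ^ 2 - β ^ 2 + (v * G * E) ^ 2 := by
        simp [pow_two, Complex.sub_re, Complex.add_re, Complex.mul_re, Complex.mul_im,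
          Complex.I_re, Complex.I_im, Complex.ofReal_re, Complex.ofReal_im]
        ring
      rw [this]
      nlinarith [sq_nonneg (v * G * E)]
    exact hbasecont.cpow continuousAt_const (Or.inl hre)
  exact intervalIntegral.integral_eq_sub_of_hasDerivAt hderiv hint
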